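/- Let p, q ≥ 2 with (p,q) ≠ (2,2), and let ε ∈ ℂ, ε ≠ 0. Then the set of points (x,y) ∈ ℂ² with x ≠ 0 satisfying p x^{p-1} = ε y and q y^{q-1} = ε x has exactly (p-1)(q-1) - 1 elements. -/

import Mathlib

open Polynomial

lemma ncard_pow_eq (n : ℕ) (hn : 0 < n) (c : ℂ) (hc : c ≠ 0) :
    Set.ncard {x : ℂ | x ^ n = c} = n := by
  classical
  obtain ⟨α, hα⟩ := IsAlgClosed.exists_pow_nat_eq (k := ℂ) c hn
  have hζ := Complex.isPrimitiveRoot_exp n hn.ne'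
  have hnodup := hζ.nthRoots_nodup (a := c) hc
  have hcard : Multiset.card (nthRoots n c) = n := by
    rw [hζ.card_nthRoots, if_pos ⟨α, hα⟩]
  have hset : {x : ℂ | x ^ n = c} = ↑(nthRoots n c).toFinset := by
    ext x; simp [mem_nthRoots hn]
  rw [hset, Set.ncard_coe_finset, Multiset.toFinset_card_of_nodup hnodup, hcard]

theorem bp_morsification_critical_count (p q : ℕ) (hp : 2 ≤ p) (hq : 2 ≤ q)
    (hpq : (p, q) ≠ (2, 2)) (ε : ℂ) (hε : ε ≠ 0) :
    Set.ncard {z : ℂ × ℂ | z.1 ≠ 0 ∧ (p : ℂ) * z.1 ^ (p - 1) = ε * z.2 ∧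
        (q : ℂ) * z.2 ^ (q - 1) = ε * z.1} = (p - 1) * (q - 1) - 1 := by
  have hp0 : (p : ℂ) ≠ 0 := Nat.cast_ne_zero.2 (by omega)
  have hq0 : (q : ℂ) ≠ 0 := Nat.cast_ne_zero.2 (by omega)
  set n := (p - 1) * (q - 1) - 1 with hn_def
  have hmk : 2 ≤ (p - 1) * (q - 1) := by
    have h2 : p ≠ 2 ∨ q ≠ 2 := by
      by_contra h; push_neg at h; exact hpq (by simp [h.1, h.2])
    rcases h2 with h | h
    · calc 2 = 2 * 1 := by ring
        _ ≤ (p - 1) * (q - 1) := Nat.mul_le_mul (by omega) (by omega)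
    · calc 2 = 1 * 2 := by ring
        _ ≤ (p - 1) * (q - 1) := Nat.mul_le_mul (by omega) (by omega)
  have hn1 : (p - 1) * (q - 1) = n + 1 := by omega
  have hnpos : 0 < n := by omega
  set c : ℂ := ε ^ q / ((q : ℂ) * (p : ℂ) ^ (q - 1)) with hc_def
  have hc : c ≠ 0 := by
    apply div_ne_zero (pow_ne_zero _ hε)
    exact mul_ne_zero hq0 (pow_ne_zero _ hp0)
  have hεq : ε ^ (q - 1) * ε = ε ^ q := by
    rw [← pow_succ]; congr 1; omega
  have hset : {z : ℂ × ℂ | z.1 ≠ 0 ∧ (p : ℂ) * z.1 ^ (p - 1) = ε * z.2 ∧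
        (q : ℂ) * z.2 ^ (q - 1) = ε * z.1} =
      (fun x : ℂ => (x, (p : ℂ) * x ^ (p - 1) / ε)) '' {x : ℂ | x ^ n = c} := by
    ext ⟨x, y⟩
    simp only [Set.mem_setOf_eq, Set.mem_image, Prod.mk.injEq]
    constructor
    · rintro ⟨hx, h1, h2⟩
      refine ⟨x, ?_, rfl, ?_⟩
      · -- x ^ n = c
        have key : (q : ℂ) * (p : ℂ) ^ (q - 1) * x ^ ((p - 1) * (q - 1)) = ε ^ q * x := by
          calc (q : ℂ) * (p : ℂ) ^ (q - 1) * x ^ ((p - 1) * (q - 1))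
              = (q : ℂ) * ((p : ℂ) * x ^ (p - 1)) ^ (q - 1) := by
                rw [mul_pow, pow_mul]; ring
            _ = (q : ℂ) * (ε * y) ^ (q - 1) := by rw [h1]
            _ = ε ^ (q - 1) * ((q : ℂ) * y ^ (q - 1)) := by rw [mul_pow]; ring
            _ = ε ^ (q - 1) * (ε * x) := by rw [h2]
            _ = ε ^ q * x := by rw [← hεq]; ring
        rw [hn1, pow_succ] at key
        have key2 : ((q : ℂ) * (p : ℂ) ^ (q - 1) * x ^ n) * x = (ε ^ q) * x := by
          rw [← key]; ring
        have key3 := mul_right_cancel₀ hx key2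
        rw [hc_def, eq_div_iff (mul_ne_zero hq0 (pow_ne_zero _ hp0))]
        rw [← key3]; ring
      · -- y = p x^(p-1)/ε
        field_simp [h1]
        exact h1
    · rintro ⟨x', hx', rfl, rfl⟩
      have hx0 : x' ≠ 0 := by
        intro h; rw [h, zero_pow hnpos.ne'] at hx'; exact hc hx'.symm
      refine ⟨hx0, by field_simp, ?_⟩
      have hpow : x' ^ ((p - 1) * (q - 1)) = c * x' := by
        rw [hn1, pow_succ, hx']
      have expand : ((p : ℂ) * x' ^ (p - 1) / ε) ^ (q - 1)
          = (p : ℂ) ^ (q - 1) * x' ^ ((p - 1) * (q - 1)) / ε ^ (q - 1) := by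
        rw [div_pow, mul_pow, pow_mul]
      rw [expand, hpow, hc_def]
      field_simp
      rw [← hεq]
  rw [hset, Set.ncard_image_of_injective _ (fun a b h => congrArg Prod.fst h)]
  exact ncard_pow_eq n hnpos c hc
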